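/- Let 𝒴 ⊆ ι be a set of indices such that pa i ∩ 𝒴 = ∅ for every i ∉ 𝒴. Then for every configuration x : Π j, α j, the sum of P over all configurations that agree with x on every coordinate outside 𝒴 equals ∏_{i ∉ 𝒴} p i x (x i); that is, marginalizing the joint weight over all variables in 𝒴 yields the product of the factors of the remaining variables. -/
import Mathlib

open Finset

open Classical in
theorem aux_sum_one {ι : Type*} [Fintype ι] [LinearOrder ι]
    (α : ι → Type*) [∀ i, Fintype (α i)] [∀ i, Nonempty (α i)]
    (pa : ι → Finset ι) (hpa : ∀ i : ι, ∀ j ∈ pa i, j < i)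
    (p : ∀ i, (∀ j, α j) → α i → ℝ)
    (hlocal : ∀ i, ∀ x y : ∀ j, α j, (∀ j ∈ pa i, x j = y j) → ∀ a : α i, p i x a = p i y a)
    (hnorm : ∀ i, ∀ x : ∀ j, α j, ∑ a : α i, p i x a = 1)
    (Y : Finset ι) :
    ∀ x : ∀ j, α j,
      ∑ y ∈ Finset.univ.filter (fun y : ∀ j, α j => ∀ j ∉ Y, y j = x j),
        ∏ i ∈ Y, p i y (y i) = 1 := by
  induction Y using Finset.strongInduction with
  | _ Y ih =>
    intro x
    rcases Y.eq_empty_or_nonempty with rfl | hY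
    · have hfe : Finset.univ.filter (fun y : ∀ j, α j => ∀ j ∉ (∅ : Finset ι), y j = x j)
          = {x} := by
        ext y
        simp [funext_iff]
      rw [hfe]
      simp
    · obtain ⟨m, hm, hmax⟩ : ∃ m ∈ Y, ∀ i ∈ Y, i ≤ m :=
        ⟨Y.max' hY, Y.max'_mem hY, fun i hi => Y.le_max' i hi⟩
      set Y' := Y.erase m with hY'
      have hss : Y' ⊂ Y := Finset.erase_ssubset hm
      set S := Finset.univ.filter (fun y : ∀ j, α j => ∀ j ∉ Y, y j = x j) with hS
      set S' := Finset.univ.filter (fun y : ∀ j, α j => ∀ j ∉ Y', y j = x j) with hS'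
      set π : (∀ j, α j) → (∀ j, α j) := fun y => Function.update y m (x m) with hπ
      have hmaps : ∀ y ∈ S, π y ∈ S' := by
        intro y hy
        simp only [hS, hS', Finset.mem_filter, Finset.mem_univ, true_and] at hy ⊢
        intro j hj
        by_cases hjm : j = m
        · subst hjm; simp [hπ]
        · rw [hπ]; simp only [Function.update_of_ne hjm]
          exact hy j (fun hjY => hj (Finset.mem_erase.mpr ⟨hjm, hjY⟩))
      rw [← Finset.sum_fiberwise_of_maps_to hmaps (fun y => ∏ i ∈ Y, p i y (y i))]
      have key : ∀ z ∈ S',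
          ∑ y ∈ S.filter (fun y => π y = z), ∏ i ∈ Y, p i y (y i)
            = ∏ i ∈ Y', p i z (z i) := by
        intro z hz
        simp only [hS', Finset.mem_filter, Finset.mem_univ, true_and] at hz
        have hzm : z m = x m := hz m (Finset.notMem_erase m Y)
        have hfib : S.filter (fun y => π y = z)
            = Finset.univ.image (fun a : α m => Function.update z m a) := by
          ext y
          simp only [Finset.mem_filter, Finset.mem_image, Finset.mem_univ, true_and, hS]
          constructor
          · rintro ⟨hyS, hyz⟩
            refine ⟨y m, ?_⟩
            funext j
            by_cases hjm : j = m
            · subst hjm; simp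
            · rw [Function.update_of_ne hjm, ← hyz, hπ]
              simp only [Function.update_of_ne hjm]
          · rintro ⟨a, rfl⟩
            constructor
            · intro j hj
              have hjm : j ≠ m := fun h => hj (h ▸ hm)
              rw [Function.update_of_ne hjm]
              exact hz j (fun h => hj (Finset.mem_of_mem_erase h))
            · funext j
              by_cases hjm : j = m
              · subst hjm; simp [hπ, hzm]
              · rw [hπ]
                simp only [Function.update_of_ne hjm]
        rw [hfib, Finset.sum_image (by
          intro a _ b _ hab
          have := congrFun hab m
          simpa using this)]
        have hterm : ∀ a : α m,
            ∏ i ∈ Y, p i (Function.update z m a) (Function.update z m a i)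
              = p m z a * ∏ i ∈ Y', p i z (z i) := by
          intro a
          rw [← Finset.mul_prod_erase Y _ hm]
          congr 1
          · rw [Function.update_self]
            exact hlocal m _ z (fun j hj =>
              Function.update_of_ne (ne_of_lt (hpa m j hj)) a z) a
          · refine Finset.prod_congr rfl (fun i hi => ?_)
            have him : i ≠ m := (Finset.mem_erase.mp hi).1
            have hiY : i ∈ Y := (Finset.mem_erase.mp hi).2
            rw [Function.update_of_ne him]
            exact hlocal i _ z (fun j hj =>
              Function.update_of_ne (fun h => absurd (h ▸ hpa i j hj)
                (not_lt.mpr (hmax i hiY))) a z) (z i)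
        rw [Finset.sum_congr rfl (fun a _ => hterm a), ← Finset.sum_mul, hnorm, one_mul]
      rw [Finset.sum_congr rfl key]
      exact ih Y' hss x

open Classical in
/-- marginalizing a set of leaf variables: if no variable outside `Y`
has a parent inside `Y`, then summing the joint weight `P y = ∏ i, p i y (y i)` over
all configurations agreeing with `x` outside `Y` yields the product of the factors of
the variables outside `Y`. -/
theorem sum_agree_outside_eq_prod_sdiff {ι : Type*} [Fintype ι] [LinearOrder ι]
    (α : ι → Type*) [∀ i, Fintype (α i)] [∀ i, Nonempty (α i)]
    (pa : ι → Finset ι) (hpa : ∀ i : ι, ∀ j ∈ pa i, j < i)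
    (p : ∀ i, (∀ j, α j) → α i → ℝ)
    (hlocal : ∀ i, ∀ x y : ∀ j, α j, (∀ j ∈ pa i, x j = y j) → ∀ a : α i, p i x a = p i y a)
    (hnorm : ∀ i, ∀ x : ∀ j, α j, ∑ a : α i, p i x a = 1)
    (P : (∀ j, α j) → ℝ) (hP : ∀ x : ∀ j, α j, P x = ∏ i, p i x (x i))
    (Y : Finset ι) (hleaf : ∀ i ∉ Y, pa i ∩ Y = ∅) :
    ∀ x : ∀ j, α j,
      ∑ y ∈ Finset.univ.filter (fun y : ∀ j, α j => ∀ j ∉ Y, y j = x j), P y =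
        ∏ i ∈ Finset.univ \ Y, p i x (x i) := by
  intro x
  have hterm : ∀ y ∈ Finset.univ.filter (fun y : ∀ j, α j => ∀ j ∉ Y, y j = x j),
      P y = (∏ i ∈ Finset.univ \ Y, p i x (x i)) * ∏ i ∈ Y, p i y (y i) := by
    intro y hy
    simp only [Finset.mem_filter, Finset.mem_univ, true_and] at hy
    rw [hP, ← Finset.prod_sdiff (Finset.subset_univ Y)]
    congr 1
    refine Finset.prod_congr rfl (fun i hi => ?_)
    have hiY : i ∉ Y := (Finset.mem_sdiff.mp hi).2
    rw [hy i hiY]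
    exact hlocal i y x (fun j hj => hy j (fun hjY =>
      (Finset.eq_empty_iff_forall_notMem.mp (hleaf i hiY) j)
        (Finset.mem_inter.mpr ⟨hj, hjY⟩))) (x i)
  rw [Finset.sum_congr rfl hterm, ← Finset.mul_sum,
    aux_sum_one α pa hpa p hlocal hnorm Y x, mul_one]
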